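/- Let the activation satisfy |σ(x)| ≤ |x| for all x, and suppose ‖Z_L − Y‖_F ≤ ε1 with ε1 < s_K(Y), ‖X‖_op > 0, and s_K(W_{L:L1+1}) > 0. Then the parameter norm of the nonlinear part satisfies Σ_{ℓ=1}^{L1} ‖W_ℓ‖_F² ≥ L1 · ((s_K(Y) − ε1)/(s_K(W_{L:L1+1})·‖X‖_op))^{2/L1}. -/

import Mathlib

open Matrix Finset Real

/-- Frobenius norm of a real matrix. -/
noncomputable def frobNorm {m n : ℕ} (A : Matrix (Fin m) (Fin n) ℝ) : ℝ :=
  Real.sqrt (∑ i, ∑ j, (A i j) ^ 2)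

/-- Operator (spectral) norm of a real matrix. -/
noncomputable def opNorm {m n : ℕ} (A : Matrix (Fin m) (Fin n) ℝ) : ℝ :=
  sSup {x : ℝ | ∃ v : Fin n → ℝ, (∑ i, v i ^ 2) ≤ 1 ∧ x = Real.sqrt (∑ i, (A.mulVec v i) ^ 2)}

theorem Matrix.isHermitian_transpose_mul_self {m n : Type*} [Fintype m]
    (A : Matrix m n ℝ) : (Aᵀ * A).IsHermitian := by
  rw [← Matrix.conjTranspose_eq_transpose_of_trivial]
  exact Matrix.isHermitian_conjTranspose_mul_self A

/-- The singular values of a real matrix, in non-increasing order (indexed by columns). -/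
noncomputable def svals {m n : ℕ} (A : Matrix (Fin m) (Fin n) ℝ) : Fin n → ℝ := fun i =>
  Real.sqrt ((Matrix.isHermitian_transpose_mul_self A).eigenvalues
    (Tuple.sort ((Matrix.isHermitian_transpose_mul_self A).eigenvalues) i.rev))

/-- `sval A k` is the `k`-th largest singular value of `A` (1-indexed). -/
noncomputable def sval {m n : ℕ} (A : Matrix (Fin m) (Fin n) ℝ) (k : ℕ) : ℝ :=
  if h : k - 1 < n then svals A ⟨k - 1, h⟩ else 0

/-- Smallest singular value of a (possibly rectangular) matrix. -/
noncomputable def smin {m n : ℕ} (A : Matrix (Fin m) (Fin n) ℝ) : ℝ :=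
  sval A (min m n)

/-- Condition number: the ratio between the largest and the smallest *nonzero*
singular values, i.e. the supremum of ratios of nonzero singular values. -/
noncomputable def kappa {m n : ℕ} (A : Matrix (Fin m) (Fin n) ℝ) : ℝ :=
  sSup {x : ℝ | ∃ i j : Fin n, svals A i ≠ 0 ∧ svals A j ≠ 0 ∧ x = svals A i / svals A j}


namespace S13


variable {p q r : ℕ}

noncomputable def sn {p : ℕ} (v : Fin p → ℝ) : ℝ := Real.sqrt (∑ i, v i ^ 2)

lemma nsq_nonneg (v : Fin p → ℝ) : 0 ≤ ∑ i, v i ^ 2 :=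
  Finset.sum_nonneg fun _ _ => sq_nonneg _

lemma sn_nonneg (v : Fin p → ℝ) : 0 ≤ sn v := Real.sqrt_nonneg _

lemma sn_sq (v : Fin p → ℝ) : sn v ^ 2 = ∑ i, v i ^ 2 := Real.sq_sqrt (nsq_nonneg v)

lemma dot_self_eq (v : Fin p → ℝ) : v ⬝ᵥ v = ∑ i, v i ^ 2 := by
  simp [dotProduct, pow_two]

lemma sn_smul (c : ℝ) (v : Fin p → ℝ) : sn (c • v) = |c| * sn v := by
  simp only [sn, Pi.smul_apply, smul_eq_mul, mul_pow, ← Finset.mul_sum]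
  rw [Real.sqrt_mul (sq_nonneg c), Real.sqrt_sq_eq_abs]

lemma sn_sub_le {p : ℕ} (u v : Fin p → ℝ) : sn (u - v) ≤ sn u + sn v := by
  have h := norm_sub_le (E := EuclideanSpace ℝ (Fin p)) (WithLp.toLp 2 u) (WithLp.toLp 2 v)
  simpa [EuclideanSpace.norm_eq, Real.norm_eq_abs, sq_abs, sn] using h

lemma frob_nonneg (A : Matrix (Fin p) (Fin q) ℝ) : 0 ≤ frobNorm A := Real.sqrt_nonneg _

lemma frob_sq (A : Matrix (Fin p) (Fin q) ℝ) : frobNorm A ^ 2 = ∑ i, ∑ j, (A i j) ^ 2 :=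
  Real.sq_sqrt (Finset.sum_nonneg fun _ _ => Finset.sum_nonneg fun _ _ => sq_nonneg _)

lemma frob_transpose (A : Matrix (Fin p) (Fin q) ℝ) : frobNorm Aᵀ = frobNorm A := by
  unfold frobNorm
  rw [Finset.sum_comm]
  rfl

/-- row-wise Cauchy–Schwarz: `∑ (A *ᵥ v) i ^ 2 ≤ (∑∑ A²) * ∑ v²`. -/
lemma nsq_mulVec_le_frob (A : Matrix (Fin p) (Fin q) ℝ) (v : Fin q → ℝ) :
    ∑ i, (A *ᵥ v) i ^ 2 ≤ frobNorm A ^ 2 * ∑ j, v j ^ 2 := by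
  rw [frob_sq, Finset.sum_mul]
  refine Finset.sum_le_sum fun i _ => ?_
  simpa [mulVec, dotProduct] using
    Finset.sum_mul_sq_le_sq_mul_sq Finset.univ (fun j => A i j) v

lemma sn_mulVec_le_frob (A : Matrix (Fin p) (Fin q) ℝ) (v : Fin q → ℝ) :
    sn (A *ᵥ v) ≤ frobNorm A * sn v := by
  have h := nsq_mulVec_le_frob A v
  have := Real.sqrt_le_sqrt h
  rwa [Real.sqrt_mul (sq_nonneg _), Real.sqrt_sq (frob_nonneg A)] at this

/-- frobenius norm is submultiplicative. -/
lemma frob_mul_le (A : Matrix (Fin p) (Fin q) ℝ) (B : Matrix (Fin q) (Fin r) ℝ) :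
    frobNorm (A * B) ≤ frobNorm A * frobNorm B := by
  have h : frobNorm (A * B) ^ 2 ≤ (frobNorm A * frobNorm B) ^ 2 := by
    rw [frob_sq, mul_pow, frob_sq, frob_sq, Finset.sum_mul]
    refine Finset.sum_le_sum fun i _ => ?_
    calc ∑ j, (A * B) i j ^ 2
        ≤ ∑ j, (∑ k, A i k ^ 2) * (∑ k, B k j ^ 2) := by
          refine Finset.sum_le_sum fun j _ => ?_
          simpa [Matrix.mul_apply] using
            Finset.sum_mul_sq_le_sq_mul_sq Finset.univ (fun k => A i k) (fun k => B k j)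
      _ = (∑ k, A i k ^ 2) * ∑ j, ∑ k, B k j ^ 2 := by rw [← Finset.mul_sum]
      _ = (∑ k, A i k ^ 2) * ∑ k, ∑ j, B k j ^ 2 := by rw [Finset.sum_comm]
  nlinarith [frob_nonneg (A * B), mul_nonneg (frob_nonneg A) (frob_nonneg B)]


section opNormLemmas

lemma opSet_bddAbove (A : Matrix (Fin p) (Fin q) ℝ) :
    BddAbove {x : ℝ | ∃ v : Fin q → ℝ, (∑ i, v i ^ 2) ≤ 1 ∧
      x = Real.sqrt (∑ i, (A.mulVec v i) ^ 2)} := by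
  refine ⟨frobNorm A, fun x hx => ?_⟩
  obtain ⟨v, hv, rfl⟩ := hx
  calc Real.sqrt (∑ i, (A.mulVec v i) ^ 2) = sn (A *ᵥ v) := rfl
    _ ≤ frobNorm A * sn v := sn_mulVec_le_frob A v
    _ ≤ frobNorm A * 1 := by
        refine mul_le_mul_of_nonneg_left ?_ (frob_nonneg A)
        have : sn v ≤ Real.sqrt 1 := Real.sqrt_le_sqrt hv
        simpa using this
    _ = frobNorm A := mul_one _

lemma sn_mulVec_le_op_aux (A : Matrix (Fin p) (Fin q) ℝ) (v : Fin q → ℝ)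
    (hv : (∑ i, v i ^ 2) ≤ 1) : sn (A *ᵥ v) ≤ opNorm A :=
  le_csSup (opSet_bddAbove A) ⟨v, hv, rfl⟩

lemma opNorm_nonneg (A : Matrix (Fin p) (Fin q) ℝ) : 0 ≤ opNorm A := by
  have h := sn_mulVec_le_op_aux A 0 (by simp)
  exact le_trans (sn_nonneg _) h

lemma sn_mulVec_le_op (A : Matrix (Fin p) (Fin q) ℝ) (v : Fin q → ℝ) :
    sn (A *ᵥ v) ≤ opNorm A * sn v := by
  by_cases hv : v = 0
  · have : sn (A *ᵥ (0 : Fin q → ℝ)) = 0 := by simp [sn, Matrix.mulVec_zero]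
    rw [hv, this]
    exact mul_nonneg (opNorm_nonneg A) (sn_nonneg _)
  · have hnsq : 0 < ∑ i, v i ^ 2 := by
      obtain ⟨i, hi⟩ := Function.ne_iff.mp hv
      refine Finset.sum_pos' (fun i _ => sq_nonneg (v i)) ⟨i, Finset.mem_univ i, ?_⟩
      have : v i ≠ 0 := hi
      positivity
    have ht : 0 < sn v := Real.sqrt_pos.mpr hnsq
    set t := sn v with htdef
    have hu : (∑ i, (t⁻¹ • v) i ^ 2) ≤ 1 := by
      have : (∑ i, (t⁻¹ • v) i ^ 2) = t⁻¹ ^ 2 * ∑ i, v i ^ 2 := by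
        simp [Pi.smul_apply, smul_eq_mul, mul_pow, Finset.mul_sum]
      rw [this, ← sn_sq v, ← htdef]
      rw [inv_pow]
      rw [inv_mul_cancel₀ (by positivity)]
    have h := sn_mulVec_le_op_aux A (t⁻¹ • v) hu
    rw [Matrix.mulVec_smul, sn_smul, abs_of_pos (inv_pos.mpr ht)] at h
    calc sn (A *ᵥ v) = t * (t⁻¹ * sn (A *ᵥ v)) := by field_simp
      _ ≤ t * opNorm A := by
          exact mul_le_mul_of_nonneg_left h (le_of_lt ht)
      _ = opNorm A * sn v := by rw [mul_comm]

/-- transpose bound : `‖Aᵀ u‖ ≤ opNorm A * ‖u‖`. -/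
lemma sn_transpose_mulVec_le_op (A : Matrix (Fin p) (Fin q) ℝ) (u : Fin p → ℝ) :
    sn (Aᵀ *ᵥ u) ≤ opNorm A * sn u := by
  set w := Aᵀ *ᵥ u with hw
  have key : sn w ^ 2 ≤ sn u * (opNorm A * sn w) := by
    have h1 : sn w ^ 2 = u ⬝ᵥ (A *ᵥ w) := by
      rw [sn_sq, ← dot_self_eq]
      rw [hw]
      rw [Matrix.mulVec_transpose]
      rw [← Matrix.dotProduct_mulVec]
    have h2 : u ⬝ᵥ (A *ᵥ w) ≤ sn u * sn (A *ᵥ w) := by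
      have hcs := Finset.sum_mul_sq_le_sq_mul_sq Finset.univ u (A *ᵥ w)
      have h3 : u ⬝ᵥ (A *ᵥ w) ≤ |u ⬝ᵥ (A *ᵥ w)| := le_abs_self _
      have h4 : |u ⬝ᵥ (A *ᵥ w)| = Real.sqrt ((u ⬝ᵥ (A *ᵥ w)) ^ 2) := by
        rw [Real.sqrt_sq_eq_abs]
      have h5 : Real.sqrt ((u ⬝ᵥ (A *ᵥ w)) ^ 2) ≤
          Real.sqrt ((∑ i, u i ^ 2) * ∑ i, (A *ᵥ w) i ^ 2) := by
        apply Real.sqrt_le_sqrt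
        simpa [dotProduct] using hcs
      rw [Real.sqrt_mul (nsq_nonneg u)] at h5
      calc u ⬝ᵥ (A *ᵥ w) ≤ _ := h3
        _ = _ := h4
        _ ≤ _ := h5
        _ = sn u * sn (A *ᵥ w) := rfl
    have h6 : sn (A *ᵥ w) ≤ opNorm A * sn w := sn_mulVec_le_op A w
    calc sn w ^ 2 = u ⬝ᵥ (A *ᵥ w) := h1
      _ ≤ sn u * sn (A *ᵥ w) := h2
      _ ≤ sn u * (opNorm A * sn w) := mul_le_mul_of_nonneg_left h6 (sn_nonneg u)
  by_cases hz : sn w = 0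
  · rw [hz]; exact mul_nonneg (opNorm_nonneg A) (sn_nonneg u)
  · have hpos : 0 < sn w := lt_of_le_of_ne (sn_nonneg w) (Ne.symm hz)
    have : sn w * sn w ≤ (opNorm A * sn u) * sn w := by
      calc sn w * sn w = sn w ^ 2 := (sq (sn w)).symm
        _ ≤ sn u * (opNorm A * sn w) := key
        _ = (opNorm A * sn u) * sn w := by ring
    exact le_of_mul_le_mul_right this hpos

/-- `frobNorm (A * B) ≤ frobNorm A * opNorm B`. -/
lemma frob_mul_le_op (A : Matrix (Fin p) (Fin q) ℝ) (B : Matrix (Fin q) (Fin r) ℝ) :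
    frobNorm (A * B) ≤ frobNorm A * opNorm B := by
  have h : frobNorm (A * B) ^ 2 ≤ (frobNorm A * opNorm B) ^ 2 := by
    rw [frob_sq, mul_pow, frob_sq, Finset.sum_mul]
    refine Finset.sum_le_sum fun i _ => ?_
    have hrow : (fun j => (A * B) i j) = Bᵀ *ᵥ (fun k => A i k) := by
      funext j
      simp [Matrix.mul_apply, Matrix.mulVec, dotProduct, mul_comm]
    have := sn_transpose_mulVec_le_op B (fun k => A i k)
    have h2 : (sn (Bᵀ *ᵥ fun k => A i k)) ^ 2 ≤ (opNorm B * sn (fun k => A i k)) ^ 2 := by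
      have hb : 0 ≤ sn (Bᵀ *ᵥ fun k => A i k) := sn_nonneg _
      nlinarith [mul_nonneg (opNorm_nonneg B) (sn_nonneg (fun k => A i k))]
    rw [sn_sq, mul_pow, sn_sq] at h2
    calc ∑ j, (A * B) i j ^ 2 = ∑ j, (Bᵀ *ᵥ fun k => A i k) j ^ 2 := by rw [← hrow]
      _ ≤ opNorm B ^ 2 * ∑ k, A i k ^ 2 := h2
      _ = (∑ k, A i k ^ 2) * opNorm B ^ 2 := by ring
  nlinarith [frob_nonneg (A * B), mul_nonneg (frob_nonneg A) (opNorm_nonneg B)]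

end opNormLemmas



variable {p q : ℕ} {M : Matrix (Fin p) (Fin p) ℝ}

lemma herm_transpose (hM : M.IsHermitian) : Mᵀ = M := by
  ext i j
  have h := congrFun (congrFun hM i) j
  simpa [Matrix.conjTranspose_apply] using h

lemma onb_dot (hM : M.IsHermitian) (i j : Fin p) :
    ⇑(hM.eigenvectorBasis i) ⬝ᵥ ⇑(hM.eigenvectorBasis j) = if i = j then 1 else 0 := by
  have h := hM.eigenvectorBasis.orthonormal
  rw [orthonormal_iff_ite] at h
  have h2 := h i j
  rw [PiLp.inner_apply] at h2
  simpa [dotProduct, RCLike.inner_apply, mul_comm] using h2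

lemma sym_orth (hM : M.IsHermitian) {v w : Fin p → ℝ} {a b : ℝ}
    (hv : M *ᵥ v = a • v) (hw : M *ᵥ w = b • w) (hab : a ≠ b) : v ⬝ᵥ w = 0 := by
  have h1 : (M *ᵥ v) ⬝ᵥ w = v ⬝ᵥ (M *ᵥ w) := by
    rw [Matrix.dotProduct_mulVec, ← Matrix.mulVec_transpose, herm_transpose hM]
  rw [hv, hw] at h1
  rw [smul_dotProduct, dotProduct_smul] at h1
  have : (a - b) * (v ⬝ᵥ w) = 0 := by
    simp only [smul_eq_mul] at h1
    ring_nf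
    ring_nf at h1
    linarith
  rcases mul_eq_zero.mp this with h | h
  · exact absurd (sub_eq_zero.mp h) hab
  · exact h

/-- orthonormal family cardinality bound. -/
lemma card_le_of_orthonormal {ι : Type*} [Fintype ι] [DecidableEq ι]
    (f : ι → (Fin p → ℝ)) (h : ∀ i j, f i ⬝ᵥ f j = if i = j then 1 else 0) :
    Fintype.card ι ≤ p := by
  have li : LinearIndependent ℝ f := by
    rw [Fintype.linearIndependent_iff]
    intro g hg i
    have h2 : (∑ j, g j • f j) ⬝ᵥ f i = 0 := by rw [hg]; simp
    have h3 : ∑ j, g j * (f j ⬝ᵥ f i) = 0 := by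
      rw [← h2]
      simp only [dotProduct, Finset.sum_apply, Pi.smul_apply, smul_eq_mul, Finset.sum_mul,
        Finset.mul_sum, mul_assoc]
      rw [Finset.sum_comm]
    simp only [h] at h3
    simpa using h3
  have hc := li.fintype_card_le_finrank
  simpa [Module.finrank_pi] using hc

lemma onb_expand (hM : M.IsHermitian) (x y : Fin p → ℝ) :
    (fun k => ∑ i, x i * ⇑(hM.eigenvectorBasis i) k) ⬝ᵥ
      (fun k => ∑ j, y j * ⇑(hM.eigenvectorBasis j) k) = ∑ i, x i * y i := by
  set b := hM.eigenvectorBasis with hb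
  calc (fun k => ∑ i, x i * ⇑(b i) k) ⬝ᵥ (fun k => ∑ j, y j * ⇑(b j) k)
      = ∑ i, ∑ j, x j * y i * (⇑(b j) ⬝ᵥ ⇑(b i)) := by
        simp only [dotProduct, Finset.sum_mul, Finset.mul_sum]
        rw [Finset.sum_comm]
        refine Finset.sum_congr rfl fun i _ => ?_
        rw [Finset.sum_comm]
        refine Finset.sum_congr rfl fun j _ => ?_
        refine Finset.sum_congr rfl fun k _ => by ring
    _ = ∑ i, x i * y i := by
        simp [hb, onb_dot hM, mul_comm]

lemma onb_repr_eq (hM : M.IsHermitian) (u : Fin p → ℝ) :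
    ∃ r : Fin p → ℝ, ∀ k, u k = ∑ i, r i * ⇑(hM.eigenvectorBasis i) k := by
  set b := hM.eigenvectorBasis with hb
  refine ⟨fun i => b.repr (WithLp.toLp 2 u) i, fun k => ?_⟩
  have h0 := b.sum_repr (WithLp.toLp 2 u)
  have h1 : (∑ x, b.repr (WithLp.toLp 2 u) x • b x) k = u k := by rw [h0]
  have h3 : (∑ x, b.repr (WithLp.toLp 2 u) x • b x) k = ∑ x, (b.repr (WithLp.toLp 2 u) x • b x) k := by
    simp
  rw [← h1, h3]
  rfl

lemma rayleigh_ge (hM : M.IsHermitian) {c : ℝ} (hc : ∀ i, c ≤ hM.eigenvalues i)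
    (u : Fin p → ℝ) : c * (u ⬝ᵥ u) ≤ u ⬝ᵥ (M *ᵥ u) := by
  set b := hM.eigenvectorBasis with hb
  obtain ⟨r, hr⟩ := onb_repr_eq hM u
  have hu : u = fun k => ∑ i, r i * ⇑(b i) k := funext hr
  have hMu : M *ᵥ u = fun k => ∑ i, (r i * hM.eigenvalues i) * ⇑(b i) k := by
    funext k
    rw [hu]
    simp only [Matrix.mulVec, dotProduct, Finset.mul_sum]
    rw [Finset.sum_comm]
    refine Finset.sum_congr rfl fun i _ => ?_
    have he := congrFun (hM.mulVec_eigenvectorBasis i) k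
    simp only [Matrix.mulVec, dotProduct, Pi.smul_apply, smul_eq_mul] at he
    calc ∑ j, M k j * (r i * ⇑(b i) j) = r i * ∑ j, M k j * ⇑(b i) j := by
          rw [Finset.mul_sum]; exact Finset.sum_congr rfl fun j _ => by ring
      _ = r i * (hM.eigenvalues i * ⇑(b i) k) := by rw [he]
      _ = (r i * hM.eigenvalues i) * ⇑(b i) k := by ring
  have h1 : u ⬝ᵥ (M *ᵥ u) = ∑ i, r i * (r i * hM.eigenvalues i) := by
    rw [hMu, hu]; exact onb_expand hM r _
  have h2 : u ⬝ᵥ u = ∑ i, r i * r i := by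
    rw [hu]; exact onb_expand hM r r
  rw [h1, h2, Finset.mul_sum]
  refine Finset.sum_le_sum fun i _ => ?_
  have := hc i
  nlinarith [mul_self_nonneg (r i)]

section Core

variable {m n : ℕ}

lemma dot_mul_transpose (A : Matrix (Fin m) (Fin n) ℝ) (v : Fin m → ℝ) (x : Fin n → ℝ) :
    v ⬝ᵥ (A *ᵥ x) = (Aᵀ *ᵥ v) ⬝ᵥ x := by
  rw [Matrix.dotProduct_mulVec, Matrix.mulVec_transpose]

lemma img_dot (A : Matrix (Fin m) (Fin n) ℝ) (v w : Fin n → ℝ) :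
    (A *ᵥ v) ⬝ᵥ (A *ᵥ w) = ((Aᵀ * A) *ᵥ v) ⬝ᵥ w := by
  rw [dot_mul_transpose, Matrix.mulVec_mulVec]

lemma dot_self_nonneg' (v : Fin m → ℝ) : 0 ≤ v ⬝ᵥ v := by
  refine Finset.sum_nonneg fun i _ => mul_self_nonneg _

lemma psd_ATA (A : Matrix (Fin m) (Fin n) ℝ) (v : Fin n → ℝ) :
    0 ≤ v ⬝ᵥ ((Aᵀ * A) *ᵥ v) := by
  rw [← Matrix.mulVec_mulVec, dot_mul_transpose Aᵀ v (A *ᵥ v), Matrix.transpose_transpose]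
  exact dot_self_nonneg' _

lemma eig_nonneg_psd {M : Matrix (Fin m) (Fin m) ℝ} (hM : M.IsHermitian)
    (hpsd : ∀ v, 0 ≤ v ⬝ᵥ (M *ᵥ v)) (i : Fin m) : 0 ≤ hM.eigenvalues i := by
  have h1 := hpsd ⇑(hM.eigenvectorBasis i)
  rw [hM.mulVec_eigenvectorBasis i, dotProduct_smul] at h1
  have h2 := onb_dot hM i i
  rw [if_pos rfl] at h2
  rw [h2] at h1
  simpa using h1

lemma transfer (A : Matrix (Fin m) (Fin n) ℝ) {v : Fin n → ℝ} {lam : ℝ}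
    (h : (Aᵀ * A) *ᵥ v = lam • v) :
    (A * Aᵀ) *ᵥ (A *ᵥ v) = lam • (A *ᵥ v) := by
  rw [Matrix.mulVec_mulVec, Matrix.mul_assoc, ← Matrix.mulVec_mulVec, h, Matrix.mulVec_smul]

lemma conjT_eq_transpose (A : Matrix (Fin m) (Fin n) ℝ) : Aᴴ = Aᵀ := by
  ext i j
  simp [Matrix.conjTranspose_apply]

lemma herm_ATA (A : Matrix (Fin m) (Fin n) ℝ) : (Aᵀ * A).IsHermitian := by
  exact Matrix.isHermitian_transpose_mul_self A

lemma herm_AAT (A : Matrix (Fin m) (Fin n) ℝ) : (A * Aᵀ).IsHermitian := by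
  have h := Matrix.isHermitian_mul_conjTranspose_self A
  rwa [conjT_eq_transpose] at h

lemma eig_congr {a : ℕ} {M N : Matrix (Fin a) (Fin a) ℝ} (h : M = N) (hM : M.IsHermitian)
    (hN : N.IsHermitian) : hM.eigenvalues = hN.eigenvalues := by subst h; rfl

end Core

section CoreMain

variable {m n : ℕ}

lemma psd_AAT (A : Matrix (Fin m) (Fin n) ℝ) (v : Fin m → ℝ) :
    0 ≤ v ⬝ᵥ ((A * Aᵀ) *ᵥ v) := by
  rw [← Matrix.mulVec_mulVec, dot_mul_transpose A v (Aᵀ *ᵥ v)]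
  exact dot_self_nonneg' _

lemma core (A : Matrix (Fin m) (Fin n) ℝ) (hm : 0 < m) (hmn : m - 1 < n) :
    ∃ u : Fin m → ℝ, u ⬝ᵥ u = 1 ∧
      (Aᵀ *ᵥ u) ⬝ᵥ (Aᵀ *ᵥ u) = sval A m ^ 2 ∧
      (∀ w : Fin m → ℝ, sval A m ^ 2 * (w ⬝ᵥ w) ≤ (Aᵀ *ᵥ w) ⬝ᵥ (Aᵀ *ᵥ w)) ∧
      0 ≤ sval A m := by
  have hmn' : m ≤ n := by omega
  have hB := herm_ATA A
  have hC := herm_AAT A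
  set μ : Fin n → ℝ := hB.eigenvalues with hμdef
  set ν : Fin m → ℝ := hC.eigenvalues with hνdef
  set b := hB.eigenvectorBasis with hbdef
  set c := hC.eigenvectorBasis with hcdef
  set s := Tuple.sort μ with hsdef
  set g : Fin n → ℝ := fun j => μ (s j) with hgdef
  have gmono : Monotone g := fun a b' h => Tuple.monotone_sort μ h
  set jm : Fin n := ⟨n - m, by omega⟩ with hjmdef
  -- sval unfolding
  have heig : (Matrix.isHermitian_transpose_mul_self A).eigenvalues = μ :=
    eig_congr rfl _ hB
  have hsval : sval A m = Real.sqrt (g jm) := by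
    rw [sval, dif_pos hmn]
    show Real.sqrt ((Matrix.isHermitian_transpose_mul_self A).eigenvalues
      (Tuple.sort ((Matrix.isHermitian_transpose_mul_self A).eigenvalues)
        (⟨m - 1, hmn⟩ : Fin n).rev)) = _
    rw [heig]
    have hrev : (⟨m - 1, hmn⟩ : Fin n).rev = jm := by
      ext
      simp only [Fin.val_rev, hjmdef]
      omega
    rw [hrev]
  -- eigen equations
  have hbeig : ∀ i : Fin n, (Aᵀ * A) *ᵥ ⇑(b i) = μ i • ⇑(b i) := hB.mulVec_eigenvectorBasis
  have hceig : ∀ i : Fin m, (A * Aᵀ) *ᵥ ⇑(c i) = ν i • ⇑(c i) := hC.mulVec_eigenvectorBasis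
  have hμ0 : ∀ i, 0 ≤ μ i := eig_nonneg_psd hB (psd_ATA A)
  have hν0 : ∀ i, 0 ≤ ν i := eig_nonneg_psd hC (psd_AAT A)
  -- minimal eigenvalue of A * Aᵀ
  obtain ⟨i0, -, hi0⟩ := Finset.exists_min_image Finset.univ ν ⟨⟨0, hm⟩, Finset.mem_univ _⟩
  have hi0' : ∀ i, ν i0 ≤ ν i := fun i => hi0 i (Finset.mem_univ i)
  set u : Fin m → ℝ := ⇑(c i0) with hudef
  have huu : u ⬝ᵥ u = 1 := by
    have h := onb_dot hC i0 i0
    rwa [if_pos rfl] at h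
  have hAtu : (Aᵀ *ᵥ u) ⬝ᵥ (Aᵀ *ᵥ u) = ν i0 := by
    have h := img_dot Aᵀ u u
    rw [Matrix.transpose_transpose] at h
    rw [h, hceig i0, smul_dotProduct, huu]
    simp
  -- the key equality
  have dir1 : g jm ≤ ν i0 := by
    by_contra hcon
    push_neg at hcon
    set idx : Fin m → Fin n := fun i => ⟨n - m + i.val, by omega⟩ with hidxdef
    have hgidx : ∀ i, g jm ≤ g (idx i) := fun i => gmono (by simp [hjmdef, hidxdef])
    have hglt : ∀ i, ν i0 < g (idx i) := fun i => lt_of_lt_of_le hcon (hgidx i)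
    have hgpos : ∀ i, 0 < g (idx i) := fun i => lt_of_le_of_lt (hν0 i0) (hglt i)
    have hraw_eig : ∀ i : Fin m, (A * Aᵀ) *ᵥ (A *ᵥ ⇑(b (s (idx i)))) =
        g (idx i) • (A *ᵥ ⇑(b (s (idx i)))) := fun i => transfer A (hbeig (s (idx i)))
    have hraw_dot : ∀ i j : Fin m, (A *ᵥ ⇑(b (s (idx i)))) ⬝ᵥ (A *ᵥ ⇑(b (s (idx j)))) =
        if i = j then g (idx i) else 0 := by
      intro i j
      rw [img_dot, hbeig (s (idx i)), smul_dotProduct]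
      have hob := onb_dot hB (s (idx i)) (s (idx j))
      rw [hob]
      have hiff : (s (idx i) = s (idx j)) ↔ i = j := by
        rw [Equiv.apply_eq_iff_eq]
        constructor
        · intro h
          have := congrArg Fin.val h
          simp only [hidxdef] at this
          exact Fin.ext (by omega)
        · intro h; rw [h]
      by_cases hij : i = j
      · rw [if_pos (hiff.mpr hij), if_pos hij]; simp [hgdef]
      · rw [if_neg (fun h => hij (hiff.mp h)), if_neg hij]; simp
    have hu_orth : ∀ i : Fin m, u ⬝ᵥ (A *ᵥ ⇑(b (s (idx i)))) = 0 := fun i =>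
      sym_orth hC (hceig i0) (hraw_eig i) (ne_of_lt (hglt i))
    set f : Fin (m + 1) → (Fin m → ℝ) :=
      Fin.cons u (fun i => (Real.sqrt (g (idx i)))⁻¹ • (A *ᵥ ⇑(b (s (idx i))))) with hfdef
    have horth : ∀ i j, f i ⬝ᵥ f j = if i = j then 1 else 0 := by
      intro i j
      induction i using Fin.cases with
      | zero =>
        induction j using Fin.cases with
        | zero => simpa [hfdef] using huu
        | succ j =>
          rw [if_neg (Ne.symm (Fin.succ_ne_zero j))]
          simp only [hfdef, Fin.cons_zero, Fin.cons_succ]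
          rw [dotProduct_smul, hu_orth j]
          simp
      | succ i =>
        induction j using Fin.cases with
        | zero =>
          rw [if_neg (Fin.succ_ne_zero i)]
          simp only [hfdef, Fin.cons_zero, Fin.cons_succ]
          rw [smul_dotProduct, dotProduct_comm, hu_orth i]
          simp
        | succ j =>
          simp only [hfdef, Fin.cons_succ]
          rw [smul_dotProduct, dotProduct_smul, hraw_dot i j]
          by_cases hij : i = j
          · subst hij
            rw [if_pos rfl, if_pos rfl]
            have h1 : Real.sqrt (g (idx i)) * Real.sqrt (g (idx i)) = g (idx i) :=
              Real.mul_self_sqrt (le_of_lt (hgpos i))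
            have h2 : Real.sqrt (g (idx i)) ≠ 0 := ne_of_gt (Real.sqrt_pos.mpr (hgpos i))
            rw [smul_eq_mul, smul_eq_mul, ← mul_assoc, ← mul_inv, h1, inv_mul_cancel₀ (ne_of_gt (hgpos i))]
          · rw [if_neg hij, if_neg (fun h => hij (Fin.succ_injective _ h))]
            simp
    have hcard := card_le_of_orthonormal f horth
    simp at hcard
  have dir2 : ν i0 ≤ g jm := by
    by_contra hcon
    push_neg at hcon
    have hgjm0 : 0 ≤ g jm := hμ0 (s jm)
    have hνpos : ∀ i, 0 < ν i := fun i => lt_of_le_of_lt hgjm0 (lt_of_lt_of_le hcon (hi0' i))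
    -- left family : images of c under Aᵀ
    have hcT_eig : ∀ i : Fin m, (Aᵀ * A) *ᵥ (Aᵀ *ᵥ ⇑(c i)) = ν i • (Aᵀ *ᵥ ⇑(c i)) := by
      intro i
      have h := transfer Aᵀ (by rw [Matrix.transpose_transpose]; exact hceig i)
      rwa [Matrix.transpose_transpose] at h
    have hcT_dot : ∀ i j : Fin m, (Aᵀ *ᵥ ⇑(c i)) ⬝ᵥ (Aᵀ *ᵥ ⇑(c j)) =
        if i = j then ν i else 0 := by
      intro i j
      have h := img_dot Aᵀ ⇑(c i) ⇑(c j)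
      rw [Matrix.transpose_transpose] at h
      rw [h, hceig i, smul_dotProduct]
      rw [onb_dot hC i j]
      by_cases hij : i = j
      · rw [if_pos hij, if_pos hij]; simp
      · rw [if_neg hij, if_neg hij]; simp
    set idx2 : Fin (n - m + 1) → Fin n := fun j => ⟨j.val, by omega⟩ with hidx2def
    have hg_le : ∀ j, g (idx2 j) ≤ g jm := by
      intro j
      refine gmono ?_
      simp only [hidx2def, hjmdef, Fin.mk_le_mk]
      omega
    have hvr_lt : ∀ (i : Fin m) (j : Fin (n - m + 1)), g (idx2 j) < ν i := fun i j =>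
      lt_of_le_of_lt (hg_le j) (lt_of_lt_of_le hcon (hi0' i))
    set f : (Fin m ⊕ Fin (n - m + 1)) → (Fin n → ℝ) :=
      Sum.elim (fun i => (Real.sqrt (ν i))⁻¹ • (Aᵀ *ᵥ ⇑(c i)))
        (fun j => ⇑(b (s (idx2 j)))) with hfdef
    have horth : ∀ i j, f i ⬝ᵥ f j = if i = j then 1 else 0 := by
      rintro (i | i) (j | j)
      · simp only [hfdef, Sum.elim_inl]
        rw [smul_dotProduct, dotProduct_smul, hcT_dot i j]
        by_cases hij : i = j
        · subst hij
          rw [if_pos rfl, if_pos rfl]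
          have h1 : Real.sqrt (ν i) * Real.sqrt (ν i) = ν i :=
            Real.mul_self_sqrt (le_of_lt (hνpos i))
          have h2 : Real.sqrt (ν i) ≠ 0 := ne_of_gt (Real.sqrt_pos.mpr (hνpos i))
          rw [smul_eq_mul, smul_eq_mul, ← mul_assoc, ← mul_inv, h1, inv_mul_cancel₀ (ne_of_gt (hνpos i))]
        · rw [if_neg hij, if_neg (by simp [hij])]
          simp
      · rw [if_neg (by simp)]
        simp only [hfdef, Sum.elim_inl, Sum.elim_inr]
        rw [smul_dotProduct]
        have h0 : (Aᵀ *ᵥ ⇑(c i)) ⬝ᵥ ⇑(b (s (idx2 j))) = 0 :=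
          sym_orth hB (hcT_eig i) (hbeig (s (idx2 j))) (ne_of_gt (hvr_lt i j))
        rw [h0]
        simp
      · rw [if_neg (by simp)]
        simp only [hfdef, Sum.elim_inl, Sum.elim_inr]
        rw [dotProduct_smul]
        have h0 : (Aᵀ *ᵥ ⇑(c j)) ⬝ᵥ ⇑(b (s (idx2 i))) = 0 :=
          sym_orth hB (hcT_eig j) (hbeig (s (idx2 i))) (ne_of_gt (hvr_lt j i))
        rw [dotProduct_comm, h0]
        simp
      · simp only [hfdef, Sum.elim_inr]
        rw [onb_dot hB]
        have hiff : (s (idx2 i) = s (idx2 j)) ↔ (Sum.inr i : Fin m ⊕ Fin (n - m + 1)) = Sum.inr j := by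
          rw [Equiv.apply_eq_iff_eq]
          constructor
          · intro h
            have := congrArg Fin.val h
            simp only [hidx2def] at this
            simp [Fin.ext this]
          · intro h
            simp only [Sum.inr.injEq] at h
            rw [h]
        by_cases hij : s (idx2 i) = s (idx2 j)
        · rw [if_pos hij, if_pos (hiff.mp hij)]
        · rw [if_neg hij, if_neg (fun h => hij (hiff.mpr h))]
    have hcard := card_le_of_orthonormal f horth
    simp at hcard
    omega
  have hgν : g jm = ν i0 := le_antisymm dir1 dir2
  have hgjm0 : 0 ≤ g jm := hμ0 (s jm)
  have hsq : sval A m ^ 2 = g jm := by rw [hsval, Real.sq_sqrt hgjm0]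
  refine ⟨u, huu, ?_, ?_, by rw [hsval]; exact Real.sqrt_nonneg _⟩
  · rw [hAtu, hsq, hgν]
  · intro w
    rw [hsq, hgν]
    have h := rayleigh_ge hC hi0' w
    have h2 : (Aᵀ *ᵥ w) ⬝ᵥ (Aᵀ *ᵥ w) = w ⬝ᵥ ((A * Aᵀ) *ᵥ w) := by
      have h3 := img_dot Aᵀ w w
      rw [Matrix.transpose_transpose] at h3
      rw [h3, dotProduct_comm]
    rw [h2]
    exact h

end CoreMain

section Assembly

lemma frob_map_le {p q : ℕ} {σ : ℝ → ℝ} (hσ : ∀ x : ℝ, |σ x| ≤ |x|)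
    (A : Matrix (Fin p) (Fin q) ℝ) : frobNorm (A.map σ) ≤ frobNorm A := by
  apply Real.sqrt_le_sqrt
  refine Finset.sum_le_sum fun i _ => Finset.sum_le_sum fun j _ => ?_
  have h := hσ (A i j)
  calc (A.map σ i j) ^ 2 = |σ (A i j)| ^ 2 := by rw [sq_abs]; rfl
    _ ≤ |A i j| ^ 2 := by exact pow_le_pow_left₀ (abs_nonneg _) h 2
    _ = (A i j) ^ 2 := sq_abs _

lemma eig_zero {p : ℕ} {M : Matrix (Fin p) (Fin p) ℝ} (hM : M.IsHermitian) (hz : M = 0)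
    (i : Fin p) : hM.eigenvalues i = 0 := by
  have he := hM.mulVec_eigenvectorBasis i
  have hM0 : ∀ k j, M k j = 0 := fun k j => by rw [hz]; rfl
  have hmv : M *ᵥ ⇑(hM.eigenvectorBasis i) = 0 := by
    funext k
    simp [Matrix.mulVec, dotProduct, hM0]
  rw [hmv] at he
  have h1 := congrArg (fun w => w ⬝ᵥ ⇑(hM.eigenvectorBasis i)) he.symm
  simp only [smul_dotProduct, zero_dotProduct] at h1
  have h2 := onb_dot hM i i
  rw [if_pos rfl] at h2
  rw [h2] at h1
  simpa using h1

lemma sval_zero_rows {m q : ℕ} (A : Matrix (Fin m) (Fin q) ℝ) (hm : m = 0) (k : ℕ) :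
    sval A k = 0 := by
  subst hm
  rw [sval]
  split
  · next h =>
    have hzero : (Aᵀ * A) = 0 := by
      ext i j
      rw [Matrix.mul_apply]
      simp
    show Real.sqrt _ = 0
    rw [eig_zero (Matrix.isHermitian_transpose_mul_self A) hzero]
    exact Real.sqrt_zero
  · rfl

end Assembly

end S13

open S13 in
/-- lower bound on the parameter norm of the nonlinear part in terms of the
smallest singular value of the product of the linear layers. -/
theorem statement13
    (L1 L2 L : ℕ) (hL1 : 1 ≤ L1) (hL2 : 1 ≤ L2) (hLdef : L = L1 + L2)
    (n : ℕ → ℕ) (N K : ℕ) (hK : n L = K)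
    (σ : ℝ → ℝ)
    (hσ : ∀ x : ℝ, |σ x| ≤ |x|)
    (W : ∀ ℓ : ℕ, Matrix (Fin (n ℓ)) (Fin (n (ℓ - 1))) ℝ)
    (X : Matrix (Fin (n 0)) (Fin N) ℝ)
    (hX : 0 < opNorm X)
    (Y : Matrix (Fin (n L)) (Fin N) ℝ)
    (Z : ∀ ℓ : ℕ, Matrix (Fin (n ℓ)) (Fin N) ℝ)
    (hZ0 : Z 0 = X)
    (hZnl : ∀ ℓ, 1 ≤ ℓ → ℓ ≤ L1 → Z ℓ = (W ℓ * Z (ℓ - 1)).map σ)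
    (hZlin : ∀ ℓ, L1 + 1 ≤ ℓ → ℓ ≤ L → Z ℓ = W ℓ * Z (ℓ - 1))
    -- partial products of the linear head: G ℓ = W_L ⋯ W_{ℓ+1}
    (G : ∀ ℓ : ℕ, Matrix (Fin (n L)) (Fin (n ℓ)) ℝ)
    (hGL : G L = 1)
    (hGrec : ∀ ℓ, L1 ≤ ℓ → ℓ < L → G ℓ = G (ℓ + 1) * W (ℓ + 1))
    (ε1 : ℝ)
    (hA1 : frobNorm (Z L - Y) ≤ ε1)
    (hε1 : ε1 < sval Y K)
    (hGK : 0 < sval (G L1) K) :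
    (L1 : ℝ) * ((sval Y K - ε1) / (sval (G L1) K * opNorm X)) ^ ((2 : ℝ) / (L1 : ℝ)) ≤
      ∑ ℓ ∈ Finset.Icc 1 L1, frobNorm (W ℓ) ^ 2 := by
  -- dimension bookkeeping
  have hL1L : L1 ≤ L := by omega
  have hKn1 : K - 1 < n L1 := by
    by_contra h
    rw [sval, dif_neg h] at hGK
    exact lt_irrefl 0 hGK
  have hK0 : 0 < K := by
    rcases Nat.eq_zero_or_pos K with h | h
    · exfalso
      rw [sval_zero_rows (G L1) (by omega) K] at hGK
      exact lt_irrefl 0 hGK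
    · exact h
  have hε1nn : 0 ≤ ε1 := le_trans (frob_nonneg _) hA1
  have hKN : K - 1 < N := by
    by_contra h
    rw [sval, dif_neg h] at hε1
    linarith
  -- core facts for G L1 and Y
  obtain ⟨u, huu, hGdot, -, hGnn⟩ :=
    core (G L1) (show 0 < n L by omega) (show n L - 1 < n L1 by rw [hK]; exact hKn1)
  obtain ⟨-, -, -, hYray, hYnn⟩ :=
    core Y (show 0 < n L by omega) (show n L - 1 < N by rw [hK]; exact hKN)
  have hsvalGeq : sval (G L1) (n L) = sval (G L1) K := congrArg (sval (G L1)) hK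
  have hsvalYeq : sval Y (n L) = sval Y K := congrArg (sval Y) hK
  -- Z L = G L1 * Z L1
  have hZLG : ∀ ℓ, L1 ≤ ℓ → ℓ ≤ L → G ℓ * Z ℓ = G L1 * Z L1 := by
    intro ℓ h1
    induction ℓ, h1 using Nat.le_induction with
    | base => intro _; rfl
    | succ ℓ hℓ ih =>
      intro h2
      have hlin := hZlin (ℓ + 1) (by omega) h2
      have e1 : Z (ℓ + 1 - 1) = Z ℓ := rfl
      rw [hlin, e1, ← Matrix.mul_assoc, ← hGrec ℓ hℓ (by omega)]
      exact ih (by omega)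
  have hZL : Z L = G L1 * Z L1 := by
    have h := hZLG L hL1L le_rfl
    rwa [hGL, Matrix.one_mul] at h
  -- Frobenius bound on Z L1
  have hZfrob : ∀ ℓ, 1 ≤ ℓ → ℓ ≤ L1 →
      frobNorm (Z ℓ) ≤ (∏ i ∈ Finset.Icc 1 ℓ, frobNorm (W i)) * opNorm X := by
    intro ℓ h1
    induction ℓ, h1 using Nat.le_induction with
    | base =>
      intro _
      have h := hZnl 1 le_rfl hL1
      have e0 : Z (1 - 1) = X := hZ0
      rw [h, e0]
      calc frobNorm ((W 1 * X).map σ) ≤ frobNorm (W 1 * X) := frob_map_le hσ _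
        _ ≤ frobNorm (W 1) * opNorm X := frob_mul_le_op _ _
        _ = (∏ i ∈ Finset.Icc 1 1, frobNorm (W i)) * opNorm X := by simp
    | succ ℓ hℓ ih =>
      intro h2
      have hprev := ih (by omega)
      have h := hZnl (ℓ + 1) (by omega) h2
      rw [h]
      have hprev' : frobNorm (Z (ℓ + 1 - 1)) ≤ (∏ i ∈ Finset.Icc 1 ℓ, frobNorm (W i)) * opNorm X :=
        hprev
      calc frobNorm ((W (ℓ + 1) * Z (ℓ + 1 - 1)).map σ)
          ≤ frobNorm (W (ℓ + 1) * Z (ℓ + 1 - 1)) := frob_map_le hσ _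
        _ ≤ frobNorm (W (ℓ + 1)) * frobNorm (Z (ℓ + 1 - 1)) := frob_mul_le _ _
        _ ≤ frobNorm (W (ℓ + 1)) * ((∏ i ∈ Finset.Icc 1 ℓ, frobNorm (W i)) * opNorm X) :=
            mul_le_mul_of_nonneg_left hprev' (frob_nonneg _)
        _ = (∏ i ∈ Finset.Icc 1 (ℓ + 1), frobNorm (W i)) * opNorm X := by
            rw [Finset.prod_Icc_succ_top (by omega : 1 ≤ ℓ + 1)]
            ring
  -- norms of u-related vectors
  have hsnu : sn u = 1 := by
    rw [sn, ← dot_self_eq, huu, Real.sqrt_one]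
  have hGu : sn ((G L1)ᵀ *ᵥ u) = sval (G L1) K := by
    rw [sn, ← dot_self_eq, hGdot, Real.sqrt_sq hGnn, hsvalGeq]
  have hYlow : sval Y K ≤ sn (Yᵀ *ᵥ u) := by
    have h := hYray u
    rw [huu, mul_one] at h
    have h2 := Real.sqrt_le_sqrt h
    rw [Real.sqrt_sq hYnn] at h2
    rw [← hsvalYeq, sn, ← dot_self_eq]
    exact h2
  have htri : sn (Yᵀ *ᵥ u) ≤ sn ((Z L)ᵀ *ᵥ u) + sn ((Z L - Y)ᵀ *ᵥ u) := by
    have hdec : Yᵀ *ᵥ u = ((Z L)ᵀ *ᵥ u) - ((Z L - Y)ᵀ *ᵥ u) := by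
      rw [Matrix.transpose_sub, Matrix.sub_mulVec]
      abel
    rw [hdec]
    exact sn_sub_le _ _
  have herr : sn ((Z L - Y)ᵀ *ᵥ u) ≤ ε1 := by
    calc sn ((Z L - Y)ᵀ *ᵥ u) ≤ frobNorm ((Z L - Y)ᵀ) * sn u := sn_mulVec_le_frob _ _
      _ = frobNorm (Z L - Y) := by rw [frob_transpose, hsnu, mul_one]
      _ ≤ ε1 := hA1
  have hmain : sn ((Z L)ᵀ *ᵥ u) ≤ sval (G L1) K * frobNorm (Z L1) := by
    have h1 : (Z L)ᵀ = (Z L1)ᵀ * (G L1)ᵀ := by rw [hZL, Matrix.transpose_mul]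
    rw [h1, ← Matrix.mulVec_mulVec]
    calc sn ((Z L1)ᵀ *ᵥ ((G L1)ᵀ *ᵥ u)) ≤ frobNorm ((Z L1)ᵀ) * sn ((G L1)ᵀ *ᵥ u) :=
          sn_mulVec_le_frob _ _
      _ = frobNorm (Z L1) * sval (G L1) K := by rw [frob_transpose, hGu]
      _ = sval (G L1) K * frobNorm (Z L1) := mul_comm _ _
  -- combine
  set P := ∏ i ∈ Finset.Icc 1 L1, frobNorm (W i) with hP
  have hPn : 0 ≤ P := Finset.prod_nonneg fun i _ => frob_nonneg _
  have hZfrobL1 : frobNorm (Z L1) ≤ P * opNorm X := hZfrob L1 hL1 le_rfl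
  have hchain : sval Y K - ε1 ≤ sval (G L1) K * (P * opNorm X) := by
    have h3 : sval (G L1) K * frobNorm (Z L1) ≤ sval (G L1) K * (P * opNorm X) :=
      mul_le_mul_of_nonneg_left hZfrobL1 (le_of_lt hGK)
    linarith
  set cq := (sval Y K - ε1) / (sval (G L1) K * opNorm X) with hcq
  have hden : 0 < sval (G L1) K * opNorm X := mul_pos hGK hX
  have hcP : cq ≤ P := by
    rw [hcq, div_le_iff₀ hden]
    calc sval Y K - ε1 ≤ sval (G L1) K * (P * opNorm X) := hchain
      _ = P * (sval (G L1) K * opNorm X) := by ring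
  have hc0 : 0 < cq := div_pos (by linarith) hden
  -- AM–GM
  have hL1R : (0:ℝ) < (L1:ℝ) := by exact_mod_cast hL1
  have hcard : (Finset.Icc 1 L1).card = L1 := by
    rw [Nat.card_Icc]
    omega
  have amgm := Real.geom_mean_le_arith_mean_weighted (Finset.Icc 1 L1)
    (fun _ => 1 / (L1:ℝ)) (fun i => frobNorm (W i) ^ 2)
    (fun i _ => by positivity)
    (by
      rw [Finset.sum_const, hcard, nsmul_eq_mul]
      field_simp)
    (fun i _ => sq_nonneg _)
  have hprodeq : ∏ i ∈ Finset.Icc 1 L1, ((frobNorm (W i) ^ 2 : ℝ) ^ ((1:ℝ) / (L1:ℝ))) =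
      (P ^ 2) ^ ((1:ℝ) / (L1:ℝ)) := by
    rw [Real.finset_prod_rpow _ _ (fun i _ => sq_nonneg _) _]
    congr 1
    rw [Finset.prod_pow, hP]
  have hsumeq : ∑ i ∈ Finset.Icc 1 L1, (1 / (L1:ℝ)) * frobNorm (W i) ^ 2 =
      (1 / (L1:ℝ)) * ∑ i ∈ Finset.Icc 1 L1, frobNorm (W i) ^ 2 := by
    rw [Finset.mul_sum]
  have hkey : cq ^ ((2:ℝ) / (L1:ℝ)) ≤ (P ^ 2) ^ ((1:ℝ) / (L1:ℝ)) := by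
    have h1 : cq ^ ((2:ℝ) / (L1:ℝ)) = (cq ^ 2) ^ ((1:ℝ) / (L1:ℝ)) := by
      have h2 : ((2:ℝ) / (L1:ℝ)) = (2:ℝ) * ((1:ℝ) / (L1:ℝ)) := by ring
      rw [h2, Real.rpow_mul hc0.le]
      norm_num
    rw [h1]
    refine Real.rpow_le_rpow (by positivity) ?_ (by positivity)
    exact pow_le_pow_left₀ hc0.le hcP 2
  calc (L1:ℝ) * cq ^ ((2:ℝ) / (L1:ℝ))
      ≤ (L1:ℝ) * ((P ^ 2) ^ ((1:ℝ) / (L1:ℝ))) := mul_le_mul_of_nonneg_left hkey hL1R.le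
    _ ≤ (L1:ℝ) * ((1 / (L1:ℝ)) * ∑ i ∈ Finset.Icc 1 L1, frobNorm (W i) ^ 2) := by
        refine mul_le_mul_of_nonneg_left ?_ hL1R.le
        rw [← hsumeq, ← hprodeq]
        exact amgm
    _ = ∑ i ∈ Finset.Icc 1 L1, frobNorm (W i) ^ 2 := by
        field_simp
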